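/- arXiv:2306.13233 — 6 statements merged into one kernel-verified Lean document; each statement's English description precedes it below -/
import Mathlib

section
/- For real numbers ε > 0 and c₀, d₀ with ε < c₀ ≤ 1/2 ≤ d₀ and ε/c₀ ≤ 1/2, we have c₀·ln((c₀-ε)/(c₀+ε)) + d₀·ln((d₀+ε)/(d₀-ε)) ≤ 8ε²/c₀. -/
theorem stmt_0 (ε c₀ d₀ : ℝ) (hε : 0 < ε) (h1 : ε < c₀) (h2 : c₀ ≤ 1/2)
    (h3 : 1/2 ≤ d₀) (h4 : ε / c₀ ≤ 1/2) :
    c₀ * Real.log ((c₀ - ε) / (c₀ + ε)) + d₀ * Real.log ((d₀ + ε) / (d₀ - ε))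
      ≤ 8 * ε ^ 2 / c₀ := by
  have hc : 0 < c₀ := hε.trans h1
  have hεc : ε ≤ c₀ / 2 := by
    rw [div_le_iff₀ hc] at h4; linarith
  have hd : (0:ℝ) < d₀ := by linarith
  have hde : ε < d₀ := by linarith
  have hcp : 0 < c₀ + ε := by linarith
  have hcm : 0 < c₀ - ε := by linarith
  have hdp : 0 < d₀ + ε := by linarith
  have hdm : 0 < d₀ - ε := by linarith
  have L1 : Real.log ((c₀ - ε) / (c₀ + ε)) ≤ (c₀ - ε) / (c₀ + ε) - 1 :=
    Real.log_le_sub_one_of_pos (div_pos hcm hcp)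
  have L2 : Real.log ((d₀ + ε) / (d₀ - ε)) ≤ (d₀ + ε) / (d₀ - ε) - 1 :=
    Real.log_le_sub_one_of_pos (div_pos hdp hdm)
  have key : c₀ * ((c₀ - ε) / (c₀ + ε) - 1) + d₀ * ((d₀ + ε) / (d₀ - ε) - 1)
      ≤ 8 * ε ^ 2 / c₀ := by
    have H : c₀ * ((c₀ - ε) / (c₀ + ε) - 1) + d₀ * ((d₀ + ε) / (d₀ - ε) - 1)
        = (2 * ε ^ 2 * (c₀ + d₀)) / ((c₀ + ε) * (d₀ - ε)) := by
      field_simp; ring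
    rw [H, div_le_div_iff₀ (by positivity) hc]
    have h5 : c₀ * (c₀ + d₀) ≤ 4 * ((c₀ + ε) * (d₀ - ε)) := by
      nlinarith [mul_nonneg hc.le (sub_nonneg.2 (h2.trans h3)),
        mul_pos hε hdm, mul_nonneg hε.le (sub_nonneg.2 (h2.trans h3))]
    nlinarith [mul_nonneg (sq_nonneg ε) (sub_nonneg.2 h5)]
  calc c₀ * Real.log ((c₀ - ε) / (c₀ + ε)) + d₀ * Real.log ((d₀ + ε) / (d₀ - ε))
      ≤ c₀ * ((c₀ - ε) / (c₀ + ε) - 1) + d₀ * ((d₀ + ε) / (d₀ - ε) - 1) := by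
        gcongr
    _ ≤ 8 * ε ^ 2 / c₀ := key
end

section
/- For real numbers ε > 0 and c₀, d₀ with ε < c₀ ≤ 1/2 ≤ d₀ and ε/c₀ ≤ 1/2, we have c₀·ln((c₀+ε)/(c₀-ε)) + d₀·ln((d₀-ε)/(d₀+ε)) ≤ 8ε²/c₀. -/
theorem stmt_1 (ε c₀ d₀ : ℝ) (hε : 0 < ε) (h1 : ε < c₀) (h2 : c₀ ≤ 1/2)
    (h3 : 1/2 ≤ d₀) (h4 : ε / c₀ ≤ 1/2) :
    c₀ * Real.log ((c₀ + ε) / (c₀ - ε)) + d₀ * Real.log ((d₀ - ε) / (d₀ + ε))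
      ≤ 8 * ε ^ 2 / c₀ := by
  have hc0 : 0 < c₀ := hε.trans h1
  have hce : 0 < c₀ - ε := by linarith
  have hd0 : 0 < d₀ := by linarith
  have hde : 0 < d₀ - ε := by linarith
  have hdp : 0 < d₀ + ε := by linarith
  have h2e : 2 * ε ≤ c₀ := by
    have := (div_le_iff₀ hc0).mp h4
    linarith
  have A : Real.log ((c₀ + ε) / (c₀ - ε)) ≤ (c₀ + ε) / (c₀ - ε) - 1 :=
    Real.log_le_sub_one_of_pos (div_pos (by linarith) hce)
  have B : Real.log ((d₀ - ε) / (d₀ + ε)) ≤ (d₀ - ε) / (d₀ + ε) - 1 :=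
    Real.log_le_sub_one_of_pos (div_pos hde hdp)
  have key : c₀ * ((c₀ + ε) / (c₀ - ε) - 1) + d₀ * ((d₀ - ε) / (d₀ + ε) - 1)
      ≤ 8 * ε ^ 2 / c₀ := by
    rw [← sub_nonneg]
    have expand : 8 * ε ^ 2 / c₀ - (c₀ * ((c₀ + ε) / (c₀ - ε) - 1) + d₀ * ((d₀ - ε) / (d₀ + ε) - 1))
        = (8 * ε ^ 2 * (c₀ - ε) * (d₀ + ε) - 2 * ε ^ 2 * c₀ * (c₀ + d₀))
          / (c₀ * (c₀ - ε) * (d₀ + ε)) := by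
      field_simp
      ring
    rw [expand]
    apply div_nonneg _ (by positivity)
    nlinarith [mul_nonneg (sq_nonneg ε) (mul_nonneg (show (0:ℝ) ≤ c₀ - 2*ε by linarith) hdp.le),
      mul_nonneg (sq_nonneg ε) (mul_nonneg hc0.le (show (0:ℝ) ≤ d₀ + 2*ε - c₀ by linarith))]
  have hA := mul_le_mul_of_nonneg_left A hc0.le
  have hB := mul_le_mul_of_nonneg_left B hd0.le
  linarith
end

section
/- Let ε > 0 and c₀ satisfy ε < c₀ ≤ 1/2 and ε/c₀ ≤ 1/2. Then the Kullback–Leibler divergence between a Bernoulli distribution with mean c₀ - ε and a Bernoulli distribution with mean c₀ + ε is at most 16ε²/c₀, and the KL divergence in the reverse direction is also at most 16ε²/c₀. -/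
/-- KL divergence between Bernoulli(p) and Bernoulli(q). -/
noncomputable def bernoulliKL (p q : ℝ) : ℝ :=
  p * Real.log (p / q) + (1 - p) * Real.log ((1 - p) / (1 - q))

lemma kl_le_chi2 (p q : ℝ) (hp0 : 0 < p) (hp1 : p < 1) (hq0 : 0 < q) (hq1 : q < 1) :
    bernoulliKL p q ≤ (p - q) ^ 2 / (q * (1 - q)) := by
  have h1 : Real.log (p / q) ≤ p / q - 1 :=
    Real.log_le_sub_one_of_pos (by positivity)
  have h2 : Real.log ((1 - p) / (1 - q)) ≤ (1 - p) / (1 - q) - 1 :=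
    Real.log_le_sub_one_of_pos (by
      apply div_pos <;> linarith)
  have hq1' : 0 < 1 - q := by linarith
  have key : p * (p / q - 1) + (1 - p) * ((1 - p) / (1 - q) - 1)
      = (p - q) ^ 2 / (q * (1 - q)) := by
    field_simp
    ring
  have hb : bernoulliKL p q ≤ p * (p / q - 1) + (1 - p) * ((1 - p) / (1 - q) - 1) := by
    unfold bernoulliKL
    have := mul_le_mul_of_nonneg_left h1 hp0.le
    have := mul_le_mul_of_nonneg_left h2 (by linarith : (0:ℝ) ≤ 1 - p)
    linarith
  linarith [key ▸ hb]

theorem stmt_3 (ε c₀ : ℝ) (hε : 0 < ε) (h1 : ε < c₀) (h2 : c₀ ≤ 1/2)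
    (h3 : ε / c₀ ≤ 1/2) :
    bernoulliKL (c₀ - ε) (c₀ + ε) ≤ 16 * ε ^ 2 / c₀ ∧
    bernoulliKL (c₀ + ε) (c₀ - ε) ≤ 16 * ε ^ 2 / c₀ := by
  have hc : 0 < c₀ := hε.trans h1
  have hε2 : 2 * ε ≤ c₀ := by
    rw [div_le_iff₀ hc] at h3; linarith
  constructor
  · have h := kl_le_chi2 (c₀ - ε) (c₀ + ε) (by linarith) (by linarith) (by linarith)
      (by linarith)
    refine h.trans ?_
    rw [div_le_div_iff₀ (by nlinarith) hc]
    have key : c₀ / 4 ≤ (c₀ + ε) * (1 - (c₀ + ε)) := by nlinarith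
    nlinarith [mul_le_mul_of_nonneg_left key (by positivity : (0:ℝ) ≤ 16 * ε ^ 2)]
  · have h := kl_le_chi2 (c₀ + ε) (c₀ - ε) (by linarith) (by linarith) (by linarith)
      (by linarith)
    refine h.trans ?_
    rw [div_le_div_iff₀ (by nlinarith) hc]
    have key : c₀ / 4 ≤ (c₀ - ε) * (1 - (c₀ - ε)) := by nlinarith
    nlinarith [mul_le_mul_of_nonneg_left key (by positivity : (0:ℝ) ≤ 16 * ε ^ 2)]
end

section
/- Let A ∈ ℝ^{n×n} be a matrix game with a fully supported Nash equilibrium (x*, y*). Suppose det(M_A) ≠ 0 and det(M_{Aᵀ}) ≠ 0, where M_A is the n×n matrix whose i-th row (for i ≤ n-1) is the difference of row 1 and row i+1 of A, and whose last row is all ones. Then (x*, y*) is the unique Nash equilibrium of A. -/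
open Finset

/-- Expected payoff of the row player. -/
def gamePayoff {n m : ℕ} (A : Matrix (Fin n) (Fin m) ℝ)
    (x : Fin n → ℝ) (y : Fin m → ℝ) : ℝ :=
  ∑ i, ∑ j, x i * A i j * y j

/-- `(x, y)` is a Nash equilibrium of the zero-sum matrix game on `A`. -/
def IsNash {n m : ℕ} (A : Matrix (Fin n) (Fin m) ℝ)
    (x : Fin n → ℝ) (y : Fin m → ℝ) : Prop :=
  x ∈ stdSimplex ℝ (Fin n) ∧ y ∈ stdSimplex ℝ (Fin m) ∧
    (∀ z ∈ stdSimplex ℝ (Fin n), gamePayoff A z y ≤ gamePayoff A x y) ∧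
    (∀ w ∈ stdSimplex ℝ (Fin m), gamePayoff A x w ≥ gamePayoff A x y)

/-- The matrix `M_A`: its `i`-th row (for `i ≤ n-2`, 0-indexed) is row `0` of
`A` minus row `i+1` of `A`, and its last row consists of all ones. -/
def Mmat {n : ℕ} (A : Matrix (Fin n) (Fin n) ℝ) : Matrix (Fin n) (Fin n) ℝ :=
  fun i j =>
    if h : (i : ℕ) + 1 < n then A ⟨0, by omega⟩ j - A ⟨(i : ℕ) + 1, h⟩ j else 1

lemma single_mem_stdSimplex' {n : ℕ} (i : Fin n) :
    (Pi.single i 1 : Fin n → ℝ) ∈ stdSimplex ℝ (Fin n) := by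
  constructor
  · intro j; by_cases h : j = i <;> simp [Pi.single_apply, h]
  · simp

lemma payoff_single_left {n m : ℕ} (A : Matrix (Fin n) (Fin m) ℝ) (i : Fin n) (y : Fin m → ℝ) :
    gamePayoff A (Pi.single i 1) y = ∑ j, A i j * y j := by
  unfold gamePayoff
  rw [Finset.sum_eq_single i]
  · simp
  · intro b _ hb; simp [Pi.single_apply, hb]
  · simp

lemma payoff_single_right {n m : ℕ} (A : Matrix (Fin n) (Fin m) ℝ) (x : Fin n → ℝ) (j : Fin m) :
    gamePayoff A x (Pi.single j 1) = ∑ i, x i * A i j := by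
  unfold gamePayoff
  refine Finset.sum_congr rfl fun i _ => ?_
  rw [Finset.sum_eq_single j]
  · simp
  · intro b _ hb; simp [Pi.single_apply, hb]
  · simp

lemma payoff_left {n m : ℕ} (A : Matrix (Fin n) (Fin m) ℝ) (x : Fin n → ℝ) (y : Fin m → ℝ) :
    gamePayoff A x y = ∑ i, x i * ∑ j, A i j * y j := by
  unfold gamePayoff
  refine Finset.sum_congr rfl fun i _ => ?_
  rw [Finset.mul_sum]
  exact Finset.sum_congr rfl fun j _ => by ring

lemma payoff_right {n m : ℕ} (A : Matrix (Fin n) (Fin m) ℝ) (x : Fin n → ℝ) (y : Fin m → ℝ) :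
    gamePayoff A x y = ∑ j, y j * ∑ i, x i * A i j := by
  unfold gamePayoff
  rw [Finset.sum_comm]
  refine Finset.sum_congr rfl fun j _ => ?_
  rw [Finset.mul_sum]
  exact Finset.sum_congr rfl fun i _ => by ring

lemma all_eq {n : ℕ} (w c : Fin n → ℝ) (v : ℝ) (hw : ∀ j, 0 < w j)
    (hw1 : ∑ j, w j = 1) (hle : ∀ j, v ≤ c j) (hsum : ∑ j, w j * c j = v) :
    ∀ j, c j = v := by
  have h1 : ∀ j ∈ Finset.univ, w j * v ≤ w j * c j :=
    fun j _ => mul_le_mul_of_nonneg_left (hle j) (hw j).le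
  have h2 : ∑ j, w j * v = ∑ j, w j * c j := by
    rw [hsum, ← Finset.sum_mul, hw1, one_mul]
  have h3 := (Finset.sum_eq_sum_iff_of_le h1).mp h2
  intro j
  exact (mul_left_cancel₀ (hw j).ne' (h3 j (Finset.mem_univ j))).symm

lemma all_eq' {n : ℕ} (w c : Fin n → ℝ) (v : ℝ) (hw : ∀ j, 0 < w j)
    (hw1 : ∑ j, w j = 1) (hle : ∀ j, c j ≤ v) (hsum : ∑ j, w j * c j = v) :
    ∀ j, c j = v := by
  have := all_eq w (fun j => -c j) (-v) hw hw1 (fun j => neg_le_neg (hle j))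
    (by simp only [mul_neg, Finset.sum_neg_distrib, hsum])
  intro j
  have h := this j
  simp only [neg_inj] at h
  exact h

lemma Mmat_mulVec {n : ℕ} (B : Matrix (Fin n) (Fin n) ℝ) (w : Fin n → ℝ) (v : ℝ)
    (hrow : ∀ i, ∑ j, B i j * w j = v) (hws : ∑ j, w j = 1) :
    (Mmat B).mulVec w = fun (i : Fin n) => if (i : ℕ) + 1 < n then (0:ℝ) else 1 := by
  funext i
  simp only [Matrix.mulVec, dotProduct, Mmat]
  by_cases h : (i : ℕ) + 1 < n
  · simp only [dif_pos h, if_pos h, sub_mul]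
    rw [Finset.sum_sub_distrib, hrow, hrow, sub_self]
  · simp only [dif_neg h, if_neg h, one_mul, hws]

theorem stmt_10 {n : ℕ} (A : Matrix (Fin n) (Fin n) ℝ) (x y : Fin n → ℝ)
    (hNE : IsNash A x y)
    (hx : ∀ i, 0 < x i) (hy : ∀ j, 0 < y j)
    (hdet : (Mmat A).det ≠ 0) (hdetT : (Mmat A.transpose).det ≠ 0) :
    ∀ x' y', IsNash A x' y' → x' = x ∧ y' = y := by
  obtain ⟨hxS, hyS, hxOpt, hyOpt⟩ := hNE
  intro x' y' hNE'
  obtain ⟨hxS', hyS', hxOpt', hyOpt'⟩ := hNE'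
  set v := gamePayoff A x y with hv
  -- all equilibria share the value
  have h1 : gamePayoff A x y' ≤ gamePayoff A x' y' := hxOpt' x hxS
  have h2 : v ≤ gamePayoff A x y' := hyOpt y' hyS'
  have h3 : gamePayoff A x' y ≤ v := hxOpt x' hxS'
  have h4 : gamePayoff A x' y' ≤ gamePayoff A x' y := hyOpt' y hyS
  have hvv : gamePayoff A x' y' = v := le_antisymm (h4.trans h3) (h2.trans h1)
  have hxy' : gamePayoff A x y' = v := le_antisymm (h1.trans_eq hvv) h2
  have hx'y : gamePayoff A x' y = v := le_antisymm h3 (hvv ▸ h4)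
  -- rows of A against y and y' all equal v
  have hrowy : ∀ i, ∑ j, A i j * y j = v := by
    refine all_eq' x _ v hx hxS.2 (fun i => ?_) ?_
    · rw [← payoff_single_left]; exact hxOpt _ (single_mem_stdSimplex' i)
    · rw [← payoff_left]
  have hrowy' : ∀ i, ∑ j, A i j * y' j = v := by
    refine all_eq' x _ v hx hxS.2 (fun i => ?_) ?_
    · rw [← payoff_single_left]
      exact (hxOpt' _ (single_mem_stdSimplex' i)).trans_eq hvv
    · rw [← payoff_left, hxy']
  -- columns against x and x' all equal v
  have hcolx : ∀ j, ∑ i, x i * A i j = v := by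
    refine all_eq y _ v hy hyS.2 (fun j => ?_) ?_
    · rw [← payoff_single_right]; exact hyOpt _ (single_mem_stdSimplex' j)
    · rw [← payoff_right]
  have hcolx' : ∀ j, ∑ i, x' i * A i j = v := by
    refine all_eq y _ v hy hyS.2 (fun j => ?_) ?_
    · rw [← payoff_single_right]
      exact hvv ▸ hyOpt' _ (single_mem_stdSimplex' j)
    · rw [← payoff_right, hx'y]
  -- invertibility
  have iA : Invertible (Mmat A) :=
    (Mmat A).invertibleOfIsUnitDet (isUnit_iff_ne_zero.mpr hdet)
  have iAT : Invertible (Mmat A.transpose) :=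
    (Mmat A.transpose).invertibleOfIsUnitDet (isUnit_iff_ne_zero.mpr hdetT)
  constructor
  · refine Matrix.mulVec_injective_of_invertible (Mmat A.transpose) ?_
    rw [Mmat_mulVec A.transpose x' v (fun i => by
          simpa only [Matrix.transpose_apply, mul_comm] using hcolx' i) hxS'.2,
        Mmat_mulVec A.transpose x v (fun i => by
          simpa only [Matrix.transpose_apply, mul_comm] using hcolx i) hxS.2]
  · refine Matrix.mulVec_injective_of_invertible (Mmat A) ?_
    rw [Mmat_mulVec A y' v hrowy' hyS'.2, Mmat_mulVec A y v hrowy hyS.2]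
end

section
/- Let A ∈ ℝ^{n×m} and let B be a k×k submatrix of A with row indices I and column indices J. Suppose B has a unique fully supported Nash equilibrium (x*, y*) (extended by zeros to distributions on [n] and [m]). If (k = n or max over i ∉ I of Σ_{j∈J} A_{i,j} y*_j < V*_B) and (k = m or min over j ∉ J of Σ_{i∈I} A_{i,j} x*_i > V*_B), then (x*, y*) is the unique Nash equilibrium of the game on A. -/
open Finset

/-- `(x, y)` is a Nash equilibrium of the subgame of `A` restricted to the
rows `I` and columns `J`. -/
def IsNashOn {n m : ℕ} (A : Matrix (Fin n) (Fin m) ℝ) (I : Finset (Fin n))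
    (J : Finset (Fin m)) (x : Fin n → ℝ) (y : Fin m → ℝ) : Prop :=
  x ∈ stdSimplex ℝ (Fin n) ∧ y ∈ stdSimplex ℝ (Fin m) ∧
    (∀ i ∉ I, x i = 0) ∧ (∀ j ∉ J, y j = 0) ∧
    (∀ z ∈ stdSimplex ℝ (Fin n), (∀ i ∉ I, z i = 0) →
      gamePayoff A z y ≤ gamePayoff A x y) ∧
    (∀ w ∈ stdSimplex ℝ (Fin m), (∀ j ∉ J, w j = 0) →
      gamePayoff A x w ≥ gamePayoff A x y)

lemma payoff_row {n m : ℕ} (A : Matrix (Fin n) (Fin m) ℝ)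
    (z : Fin n → ℝ) (y : Fin m → ℝ) :
    gamePayoff A z y = ∑ i, z i * (∑ j, A i j * y j) := by
  unfold gamePayoff
  simp [Finset.mul_sum, mul_assoc]

lemma payoff_col {n m : ℕ} (A : Matrix (Fin n) (Fin m) ℝ)
    (x : Fin n → ℝ) (w : Fin m → ℝ) :
    gamePayoff A x w = ∑ j, (∑ i, A i j * x i) * w j := by
  unfold gamePayoff
  rw [Finset.sum_comm]
  refine Finset.sum_congr rfl fun j _ => ?_
  rw [Finset.sum_mul]
  exact Finset.sum_congr rfl fun i _ => by ring

lemma simplex_terms_eq {n : ℕ} (z r : Fin n → ℝ) (V : ℝ)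
    (hz0 : ∀ i, 0 ≤ z i) (hz1 : ∑ i, z i = 1)
    (hr : ∀ i, r i ≤ V) (heq : ∑ i, z i * r i = V) :
    ∀ i, z i * (V - r i) = 0 := by
  have hsum : ∑ i, z i * (V - r i) = 0 := by
    simp only [mul_sub]
    rw [Finset.sum_sub_distrib, ← Finset.sum_mul, hz1, heq, one_mul, sub_self]
  intro i
  exact (Finset.sum_eq_zero_iff_of_nonneg
    (fun i _ => mul_nonneg (hz0 i) (sub_nonneg.2 (hr i)))).1 hsum i (Finset.mem_univ i)

lemma simplex_sum_le {n : ℕ} (z r : Fin n → ℝ) (V : ℝ)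
    (hz0 : ∀ i, 0 ≤ z i) (hz1 : ∑ i, z i = 1)
    (hr : ∀ i, r i ≤ V) : ∑ i, z i * r i ≤ V := by
  calc ∑ i, z i * r i ≤ ∑ i, z i * V :=
        Finset.sum_le_sum fun i _ => mul_le_mul_of_nonneg_left (hr i) (hz0 i)
    _ = V := by rw [← Finset.sum_mul, hz1, one_mul]

lemma single_mem {n : ℕ} (i : Fin n) :
    (fun i' => if i' = i then (1:ℝ) else 0) ∈ stdSimplex ℝ (Fin n) := by
  constructor
  · intro i'; dsimp; split <;> norm_num
  · simp

theorem stmt_11 {n m : ℕ} (A : Matrix (Fin n) (Fin m) ℝ)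
    (I : Finset (Fin n)) (J : Finset (Fin m)) (x' : Fin n → ℝ) (y' : Fin m → ℝ)
    -- `(x', y')` is a fully supported Nash equilibrium of the subgame `B`
    (hNE : IsNashOn A I J x' y')
    (hxpos : ∀ i ∈ I, 0 < x' i) (hypos : ∀ j ∈ J, 0 < y' j)
    -- and it is the unique equilibrium of the subgame
    (huniq : ∀ x y, IsNashOn A I J x y → x = x' ∧ y = y')
    -- every row outside `I` strictly loses against `y'`
    (hrow : I = Finset.univ ∨
      ∀ i ∉ I, ∑ j ∈ J, A i j * y' j < gamePayoff A x' y')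
    -- every column outside `J` strictly loses against `x'`
    (hcol : J = Finset.univ ∨
      ∀ j ∉ J, ∑ i ∈ I, A i j * x' i > gamePayoff A x' y') :
    IsNash A x' y' ∧ ∀ x y, IsNash A x y → x = x' ∧ y = y' := by
  obtain ⟨hx', hy', hx0, hy0, hbrx, hbry⟩ := hNE
  set V := gamePayoff A x' y' with hV
  set r : Fin n → ℝ := fun i => ∑ j, A i j * y' j with hrdef
  set c : Fin m → ℝ := fun j => ∑ i, A i j * x' i with hcdef
  -- restricting the sums
  have hrJ : ∀ i, r i = ∑ j ∈ J, A i j * y' j := by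
    intro i
    rw [hrdef]
    exact (Finset.sum_subset (Finset.subset_univ J)
      (fun j _ hj => by rw [hy0 j hj, mul_zero])).symm
  have hcI : ∀ j, c j = ∑ i ∈ I, A i j * x' i := by
    intro j
    rw [hcdef]
    exact (Finset.sum_subset (Finset.subset_univ I)
      (fun i _ hi => by rw [hx0 i hi, mul_zero])).symm
  -- row payoffs are at most V
  have hrle : ∀ i, r i ≤ V := by
    intro i
    by_cases hi : i ∈ I
    · have hmem := single_mem (n := n) i
      have hsupp : ∀ i' ∉ I, (fun i' => if i' = i then (1:ℝ) else 0) i' = 0 := by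
        intro i' hi'
        simp only
        rw [if_neg]
        rintro rfl; exact hi' hi
      have := hbrx _ hmem hsupp
      rwa [payoff_row, Finset.sum_eq_single i (fun b _ hb => by simp [hb])
        (fun h => absurd (Finset.mem_univ i) h), if_pos rfl, one_mul] at this
    · rcases hrow with h | h
      · exact absurd (h ▸ Finset.mem_univ i) hi
      · rw [hrJ i]; exact le_of_lt (h i hi)
  -- column payoffs are at least V
  have hcge : ∀ j, V ≤ c j := by
    intro j
    by_cases hj : j ∈ J
    · have hmem := single_mem (n := m) j
      have hsupp : ∀ j' ∉ J, (fun j' => if j' = j then (1:ℝ) else 0) j' = 0 := by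
        intro j' hj'
        simp only
        rw [if_neg]
        rintro rfl; exact hj' hj
      have := hbry _ hmem hsupp
      rwa [payoff_col, Finset.sum_eq_single j (fun b _ hb => by simp [hb])
        (fun h => absurd (Finset.mem_univ j) h), if_pos rfl, mul_one] at this
    · rcases hcol with h | h
      · exact absurd (h ▸ Finset.mem_univ j) hj
      · rw [hcI j]; exact le_of_lt (h j hj)
  -- the Nash property for (x', y')
  have hVrow : V = ∑ i, x' i * r i := by rw [hV, payoff_row]
  have hVcol : V = ∑ j, c j * y' j := by rw [hV, payoff_col]
  have hNash : IsNash A x' y' := by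
    refine ⟨hx', hy', ?_, ?_⟩
    · intro z hz
      rw [payoff_row]
      exact simplex_sum_le z r V hz.1 hz.2 hrle
    · intro w hw
      rw [payoff_col]
      have : ∑ j, w j * (- c j) ≤ -V := by
        refine le_trans (simplex_sum_le w (fun j => - c j) (-V) hw.1 hw.2
          (fun j => neg_le_neg (hcge j))) (le_refl _)
      have h2 : ∑ j, c j * w j = - ∑ j, w j * (- c j) := by
        rw [← Finset.sum_neg_distrib]
        exact Finset.sum_congr rfl fun j _ => by ring
      rw [ge_iff_le, h2]
      linarith
  refine ⟨hNash, ?_⟩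
  intro x y hxy
  obtain ⟨hx, hy, hbx, hby⟩ := hxy
  obtain ⟨_, _, hbrx', hbry'⟩ := hNash
  -- value chain
  have h1 : V ≤ gamePayoff A x' y := hbry' y hy
  have h2 : gamePayoff A x' y ≤ gamePayoff A x y := hbx x' hx'
  have h3 : gamePayoff A x y ≤ gamePayoff A x y' := hby y' hy'
  have h4 : gamePayoff A x y' ≤ V := hbrx' x hx
  have hxy'V : gamePayoff A x y' = V := le_antisymm h4 (by linarith)
  have hx'yV : gamePayoff A x' y = V := le_antisymm (by linarith) h1
  -- support of x is in I
  have hxsupp : ∀ i ∉ I, x i = 0 := by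
    intro i hi
    rcases hrow with h | h
    · exact absurd (h ▸ Finset.mem_univ i) hi
    · have hlt : r i < V := by rw [hrJ i]; exact h i hi
      have heq : ∑ i, x i * r i = V := by rw [← payoff_row]; exact hxy'V
      have := simplex_terms_eq x r V hx.1 hx.2 hrle heq i
      rcases mul_eq_zero.1 this with h0 | h0
      · exact h0
      · exact absurd h0 (by linarith [hlt] ; )
  -- support of y is in J
  have hysupp : ∀ j ∉ J, y j = 0 := by
    intro j hj
    rcases hcol with h | h
    · exact absurd (h ▸ Finset.mem_univ j) hj
    · have hlt : V < c j := by rw [hcI j]; exact h j hj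
      have heq : ∑ j, y j * (- c j) = -V := by
        have h2 : ∑ j, y j * (- c j) = - ∑ j, c j * y j := by
          rw [← Finset.sum_neg_distrib]
          exact Finset.sum_congr rfl fun j _ => by ring
        rw [h2, ← payoff_col, hx'yV]
      have := simplex_terms_eq y (fun j => - c j) (-V) hy.1 hy.2
        (fun j => neg_le_neg (hcge j)) heq j
      rcases mul_eq_zero.1 this with h0 | h0
      · exact h0
      · exact absurd (show (-V) - (-(c j)) = 0 from h0) (by intro h'; linarith)
  exact huniq x y ⟨hx, hy, hxsupp, hysupp,
    fun z hz _ => hbx z hz, fun w hw _ => hby w hw⟩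
end

section
/- Consider a process where at each time t on an interval [t_k, t_{k+1}) the iterate satisfies δ_{t+1} = δ_t + a_{j_t}/(D₁T₁) with no projection, where j_t ∈ [n] and a_j ∈ [-1,1] are fixed reals. Let n_j^{(k)} be the number of times column j appears in the interval. Then the weighted sum along the trajectory satisfies the closed form: Σ_{t=t_k}^{t_{k+1}-1} a_{j_t} δ_t = δ_{t_k} · Σ_j n_j^{(k)} a_j − Σ_j n_j^{(k)} a_j² / (2D₁T₁) + (1/(2D₁)) · (Σ_j a_j n_j^{(k)} / √T₁)². -/
open Finset

lemma fiber_sum {n : ℕ} (jseq : ℕ → Fin n) (s e : ℕ) (f : Fin n → ℝ) :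
    ∑ t ∈ Finset.Ico s e, f (jseq t) =
      ∑ q, (((Finset.Ico s e).filter (fun t => jseq t = q)).card : ℝ) * f q := by
  rw [← Finset.sum_fiberwise (Finset.Ico s e) jseq (fun t => f (jseq t))]
  refine Finset.sum_congr rfl fun q _ => ?_
  rw [Finset.sum_congr rfl (fun t ht => ?_), Finset.sum_const, nsmul_eq_mul]
  exact congrArg f (Finset.mem_filter.mp ht).2

lemma half_square (x : ℕ → ℝ) (s e : ℕ) (hse : s ≤ e) :
    ∑ t ∈ Finset.Ico s e, x t * (∑ u ∈ Finset.Ico s t, x u) =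
      ((∑ t ∈ Finset.Ico s e, x t) ^ 2 - ∑ t ∈ Finset.Ico s e, (x t) ^ 2) / 2 := by
  induction e, hse using Nat.le_induction with
  | base => simp
  | succ e hse ih =>
      rw [Finset.sum_Ico_succ_top hse, Finset.sum_Ico_succ_top hse,
        Finset.sum_Ico_succ_top hse, ih]
      ring

theorem stmt_19 (n : ℕ) (a : Fin n → ℝ) (ha : ∀ q, a q ∈ Set.Icc (-1 : ℝ) 1)
    (D₁ T₁ : ℝ) (hD₁ : 0 < D₁) (hT₁ : 0 < T₁)
    (jseq : ℕ → Fin n) (δ : ℕ → ℝ) (s e : ℕ) (hse : s ≤ e)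
    -- unprojected update rule on the interval `[s, e)`
    (hrec : ∀ t, s ≤ t → t < e → δ (t + 1) = δ t + a (jseq t) / (D₁ * T₁)) :
    ∑ t ∈ Finset.Ico s e, a (jseq t) * δ t =
      δ s * (∑ q, (((Finset.Ico s e).filter (fun t => jseq t = q)).card : ℝ) * a q)
        - (∑ q, (((Finset.Ico s e).filter (fun t => jseq t = q)).card : ℝ) * (a q) ^ 2)
            / (2 * D₁ * T₁)
        + (1 / (2 * D₁)) *
            ((∑ q, a q * (((Finset.Ico s e).filter (fun t => jseq t = q)).card : ℝ))
              / Real.sqrt T₁) ^ 2 := by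
  set x : ℕ → ℝ := fun t => a (jseq t) with hx
  have hδ : ∀ t, s ≤ t → t ≤ e →
      δ t = δ s + (∑ u ∈ Finset.Ico s t, x u) / (D₁ * T₁) := by
    intro t hst
    induction t, hst using Nat.le_induction with
    | base => simp
    | succ t hst ih =>
        intro hte
        have hte' : t < e := Nat.lt_of_succ_le hte
        rw [hrec t hst hte', ih (le_of_lt hte'), Finset.sum_Ico_succ_top hst]
        ring
  have hS : (∑ q, a q * (((Finset.Ico s e).filter (fun t => jseq t = q)).card : ℝ)) =
      ∑ t ∈ Finset.Ico s e, x t := by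
    rw [fiber_sum jseq s e a]; exact Finset.sum_congr rfl fun q _ => by ring
  have hSa : (∑ q, (((Finset.Ico s e).filter (fun t => jseq t = q)).card : ℝ) * a q) =
      ∑ t ∈ Finset.Ico s e, x t := (fiber_sum jseq s e a).symm
  have hQ : (∑ q, (((Finset.Ico s e).filter (fun t => jseq t = q)).card : ℝ) * (a q) ^ 2) =
      ∑ t ∈ Finset.Ico s e, (x t) ^ 2 := (fiber_sum jseq s e (fun q => (a q) ^ 2)).symm
  have hLHS : ∑ t ∈ Finset.Ico s e, a (jseq t) * δ t =
      δ s * (∑ t ∈ Finset.Ico s e, x t) +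
        (∑ t ∈ Finset.Ico s e, x t * (∑ u ∈ Finset.Ico s t, x u)) / (D₁ * T₁) := by
    have hcong : ∀ t ∈ Finset.Ico s e, a (jseq t) * δ t =
        δ s * x t + x t * (∑ u ∈ Finset.Ico s t, x u) / (D₁ * T₁) := by
      intro t ht
      obtain ⟨h1, h2⟩ := Finset.mem_Ico.mp ht
      rw [hδ t h1 (le_of_lt h2)]
      show x t * _ = δ s * x t + x t * _ / (D₁ * T₁)
      ring
    rw [Finset.sum_congr rfl hcong, Finset.sum_add_distrib, ← Finset.mul_sum,
      ← Finset.sum_div]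
  rw [hLHS, hS, hSa, hQ, half_square x s e hse, div_pow,
    Real.sq_sqrt hT₁.le]
  field_simp
  ring
end
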